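/- Let G = S∞ be the group of all permutations of ℤ, equipped with the topology of pointwise convergence, and let H = {σ ∈ G | σ is strictly increasing for the usual order on ℤ} be the stabilizer of the usual order, i.e., the group of translations of ℤ. Then the pair (G,H) is maximally relatively extremely amenable: (G,H) is relatively extremely amenable, and for every subgroup H' of G with H ⊆ H' such that (G,H') is relatively extremely amenable, one has H' = H. -/

import Mathlib

/-- A topological group `G` is *extremely amenable* if every continuous action of `G`
on a nonempty compact Hausdorff space has a `G`-fixed point. -/
def ExtremelyAmenable (G : Type) [Group G] [TopologicalSpace G] : Prop :=
  ∀ (X : Type) [TopologicalSpace X] [CompactSpace X] [T2Space X] [Nonempty X]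
    [MulAction G X] [ContinuousSMul G X], ∃ x : X, ∀ g : G, g • x = x

/-- The pair `(G, H)` is *relatively extremely amenable* if every continuous action of `G`
on a nonempty compact Hausdorff space has a point fixed by every element of `H`. -/
def RelativelyExtremelyAmenable (G : Type) [Group G] [TopologicalSpace G] (H : Subgroup G) :
    Prop :=
  ∀ (X : Type) [TopologicalSpace X] [CompactSpace X] [T2Space X] [Nonempty X]
    [MulAction G X] [ContinuousSMul G X], ∃ x : X, ∀ h ∈ H, h • x = x
/-- The topology of pointwise convergence on the permutation group of a set `α`
(`α` being given the discrete topology): the topology induced by the embedding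
`σ ↦ (σ, σ⁻¹)` into `(α → α) × (α → α)`. -/
def permPointwiseTopology (α : Type) : TopologicalSpace (Equiv.Perm α) :=
  letI : TopologicalSpace α := ⊥
  TopologicalSpace.induced
    (fun σ : Equiv.Perm α => ((⇑σ, ⇑σ.symm) : (α → α) × (α → α))) inferInstance

/-- The subgroup of the permutation group of a linear order `α` consisting of the
permutations that are strictly increasing. -/
def strictMonoPerms (α : Type) [LinearOrder α] : Subgroup (Equiv.Perm α) where
  carrier := {σ : Equiv.Perm α | StrictMono ⇑σ}
  one_mem' := fun _ _ h => h
  mul_mem' := fun ha hb _ _ h => ha (hb h)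
  inv_mem' := by
    intro a ha x y hxy
    have h := ha.lt_iff_lt (a := a⁻¹ x) (b := a⁻¹ y)
    rw [Equiv.Perm.inv_def, Equiv.apply_symm_apply, Equiv.apply_symm_apply] at h
    exact h.mp hxy

noncomputable instance : TopologicalSpace (Equiv.Perm ℤ) := permPointwiseTopology ℤ


section Aux


lemma exists_perm_extend {m : ℕ} (g h : Fin m → ℤ) (hg : Function.Injective g)
    (hh : Function.Injective h) : ∃ σ : Equiv.Perm ℤ, ∀ j, σ (g j) = h j := by
  classical
  set s : Set ℤ := Set.range g with hs
  set t : Set ℤ := Set.range h with ht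
  have hcompl : ∀ (u : Set ℤ), u.Finite → Nonempty (Denumerable ↥(uᶜ)) := by
    intro u hu
    have h1 : (uᶜ).Infinite := hu.infinite_compl
    have h2 : Infinite ↥(uᶜ) := h1.to_subtype
    exact nonempty_denumerable _
  obtain ⟨d1⟩ := hcompl s (Set.finite_range g)
  obtain ⟨d2⟩ := hcompl t (Set.finite_range h)
  let e : s ≃ t := (Equiv.ofInjective g hg).symm.trans (Equiv.ofInjective h hh)
  let e' : ↥(sᶜ) ≃ ↥(tᶜ) := (Denumerable.eqv _).trans (Denumerable.eqv _).symm
  refine ⟨(Equiv.Set.sumCompl s).symm.trans ((e.sumCongr e').trans (Equiv.Set.sumCompl t)),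
    fun j => ?_⟩
  have hmem : g j ∈ s := ⟨j, rfl⟩
  have h1 : (Equiv.Set.sumCompl s).symm (g j) = Sum.inl ⟨g j, hmem⟩ :=
    Equiv.Set.sumCompl_symm_apply_of_mem hmem
  have h2 : e ⟨g j, hmem⟩ = ⟨h j, ⟨j, rfl⟩⟩ := by
    have : (Equiv.ofInjective g hg).symm ⟨g j, hmem⟩ = j := Equiv.ofInjective_symm_apply hg j
    simp [e, this, Equiv.ofInjective_apply]
    rfl
  simp [h1, h2]

theorem infinite_ramsey {ι : Type} [Finite ι] [Nonempty ι] :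
    ∀ (m : ℕ) (c : Finset ℕ → ι) (S : Set ℕ), S.Infinite →
      ∃ M, M ⊆ S ∧ M.Infinite ∧ ∃ i, ∀ s : Finset ℕ, ↑s ⊆ M → s.card = m → c s = i := by
  intro m
  induction m with
  | zero =>
    intro c S hS
    exact ⟨S, le_refl _, hS, c ∅, fun s _ hcard => by rw [Finset.card_eq_zero.mp hcard]⟩
  | succ m ih =>
    intro c S hS
    have key : ∀ T : Set ℕ, T.Infinite → ∃ (T' : Set ℕ) (i : ι),
        T' ⊆ T ∧ T'.Infinite ∧ (∀ x ∈ T', sInf T < x) ∧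
        ∀ s : Finset ℕ, ↑s ⊆ T' → s.card = m → c (insert (sInf T) s) = i := by
      intro T hT
      have hsub : (T \ Set.Iic (sInf T)).Infinite := hT.diff (Set.finite_Iic _)
      obtain ⟨M, hMsub, hMinf, i, hi⟩ := ih (fun s => c (insert (sInf T) s)) _ hsub
      refine ⟨M, i, fun x hx => (hMsub hx).1, hMinf, fun x hx => ?_, hi⟩
      have := (hMsub hx).2
      simp only [Set.mem_Iic, not_le] at this
      exact this
    choose next color hsub hinf hgt hcol using key
    let f : ℕ → {T : Set ℕ // T.Infinite} := fun n =>
      Nat.rec ⟨S, hS⟩ (fun _ p => ⟨next p.1 p.2, hinf p.1 p.2⟩) n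
    have hf_succ : ∀ n, (f (n + 1)).1 = next (f n).1 (f n).2 := fun n => rfl
    have hanti : Antitone (fun n => (f n).1) := by
      apply antitone_nat_of_succ_le
      intro n
      rw [hf_succ]
      exact hsub _ _
    set a : ℕ → ℕ := fun n => sInf (f n).1 with ha
    have hamem : ∀ n, a n ∈ (f n).1 := fun n => Nat.sInf_mem (f n).2.nonempty
    have hlt : ∀ n, ∀ x ∈ (f (n+1)).1, a n < x := by
      intro n x hx
      rw [hf_succ] at hx
      exact hgt _ _ _ hx
    have hastrict : StrictMono a := by
      apply strictMono_nat_of_lt_succ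
      intro n
      exact hlt n _ (hamem (n+1))
    obtain ⟨j, hj⟩ := Finite.exists_infinite_fiber (fun n => color (f n).1 (f n).2)
    have hK : ((fun n => color (f n).1 (f n).2) ⁻¹' {j}).Infinite := Set.infinite_coe_iff.mp hj
    refine ⟨a '' ((fun n => color (f n).1 (f n).2) ⁻¹' {j}), ?_, hK.image
      (Set.injOn_of_injective hastrict.injective), j, ?_⟩
    · rintro x ⟨n, _, rfl⟩
      have : (f n).1 ⊆ S := by
        have := hanti (Nat.zero_le n)
        exact this
      exact this (hamem n)
    · intro s hsM hcard
      have hne : s.Nonempty := Finset.card_pos.mp (by omega)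
      obtain ⟨n, hnK, hax⟩ := hsM (s.min'_mem hne)
      have hax' : sInf ((f n).val) = s.min' hne := hax
      have herase : ∀ y ∈ s.erase (s.min' hne), ∃ l, l ∈ (fun n => color (f n).1 (f n).2) ⁻¹' {j} ∧
          n < l ∧ a l = y := by
        intro y hy
        obtain ⟨l, hlK, hal⟩ := hsM (Finset.mem_of_mem_erase hy)
        refine ⟨l, hlK, ?_, hal⟩
        have hyx : s.min' hne < y := by
          rcases lt_or_eq_of_le (s.min'_le y (Finset.mem_of_mem_erase hy)) with h | h
          · exact h
          · exact absurd h.symm (Finset.ne_of_mem_erase hy)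
        have : a n < a l := by rw [hax, hal]; exact hyx
        exact hastrict.lt_iff_lt.mp this
      have hsubset : ↑(s.erase (s.min' hne)) ⊆ (f (n+1)).1 := by
        intro y hy
        obtain ⟨l, _, hnl, hal⟩ := herase y hy
        have : a l ∈ (f l).1 := hamem l
        rw [hal] at this
        exact hanti (by omega : n + 1 ≤ l) this
      have hcards : (s.erase (s.min' hne)).card = m := by
        rw [Finset.card_erase_of_mem (s.min'_mem hne), hcard]; omega
      have := hcol (f n).1 (f n).2 (s.erase (s.min' hne)) hsubset hcards
      rw [hax', Finset.insert_erase (s.min'_mem hne)] at this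
      rw [this]
      exact hnK

section PermTop

lemma isOpen_perm_apply_eq (a b : ℤ) : IsOpen {σ : Equiv.Perm ℤ | σ a = b} := by
  letI : TopologicalSpace ℤ := ⊥
  haveI : DiscreteTopology ℤ := ⟨rfl⟩
  have h : IsOpen ((fun p : (ℤ → ℤ) × (ℤ → ℤ) => p.1 a) ⁻¹' {b}) :=
    ((continuous_apply a).comp continuous_fst).isOpen_preimage _ (isOpen_discrete _)
  exact isOpen_induced (f := fun σ : Equiv.Perm ℤ => ((⇑σ, ⇑σ.symm) : (ℤ → ℤ) × (ℤ → ℤ))) h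

lemma isOpen_perm_symm_apply_eq (a b : ℤ) : IsOpen {σ : Equiv.Perm ℤ | σ.symm a = b} := by
  letI : TopologicalSpace ℤ := ⊥
  haveI : DiscreteTopology ℤ := ⟨rfl⟩
  have h : IsOpen ((fun p : (ℤ → ℤ) × (ℤ → ℤ) => p.2 a) ⁻¹' {b}) :=
    ((continuous_apply a).comp continuous_snd).isOpen_preimage _ (isOpen_discrete _)
  exact isOpen_induced (f := fun σ : Equiv.Perm ℤ => ((⇑σ, ⇑σ.symm) : (ℤ → ℤ) × (ℤ → ℤ))) h

/-- Pointwise stabilizers of finite sets form a neighborhood basis of `1`. -/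
lemma exists_finset_stab_subset {U : Set (Equiv.Perm ℤ)} (hU : U ∈ nhds (1 : Equiv.Perm ℤ)) :
    ∃ F : Finset ℤ, {σ : Equiv.Perm ℤ | ∀ a ∈ F, σ a = a} ⊆ U := by
  classical
  letI : TopologicalSpace ℤ := ⊥
  haveI : DiscreteTopology ℤ := ⟨rfl⟩
  have hnhds : (nhds (1 : Equiv.Perm ℤ)) = Filter.comap
      (fun σ : Equiv.Perm ℤ => ((⇑σ, ⇑σ.symm) : (ℤ → ℤ) × (ℤ → ℤ)))
      (nhds ((id, id) : (ℤ → ℤ) × (ℤ → ℤ))) := by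
    have := nhds_induced (T := inferInstance)
      (fun σ : Equiv.Perm ℤ => ((⇑σ, ⇑σ.symm) : (ℤ → ℤ) × (ℤ → ℤ))) 1
    exact this
  rw [hnhds, Filter.mem_comap] at hU
  obtain ⟨T, hT, hTU⟩ := hU
  rw [nhds_prod_eq, Filter.mem_prod_iff] at hT
  obtain ⟨T1, hT1, T2, hT2, hT12⟩ := hT
  rw [nhds_pi, Filter.mem_pi] at hT1 hT2
  obtain ⟨I1, hI1fin, t1, ht1, ht1sub⟩ := hT1
  obtain ⟨I2, hI2fin, t2, ht2, ht2sub⟩ := hT2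
  refine ⟨hI1fin.toFinset ∪ hI2fin.toFinset, fun σ hσ => ?_⟩
  simp only [Set.mem_setOf_eq, Finset.mem_union, Set.Finite.mem_toFinset] at hσ
  apply hTU
  apply hT12
  constructor
  · apply ht1sub
    intro a ha
    show σ a ∈ t1 a
    rw [hσ a (Or.inl ha)]
    have := ht1 a
    rw [nhds_discrete, Filter.mem_pure] at this
    exact this
  · apply ht2sub
    intro a ha
    have h1 : σ a = a := hσ a (Or.inr ha)
    have h2 : σ.symm a = a := by
      conv_lhs => rw [← h1]
      exact σ.symm_apply_apply a
    show σ.symm a ∈ t2 a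
    rw [h2]
    have := ht2 a
    rw [nhds_discrete, Filter.mem_pure] at this
    exact this

end PermTop

/-- Tube lemma for group actions. -/
lemma exists_nhds_one_smul_mem {G X : Type} [Group G] [TopologicalSpace G] [TopologicalSpace X]
    [MulAction G X] [ContinuousSMul G X] {K V : Set X} (hK : IsCompact K) (hV : IsOpen V)
    (hKV : K ⊆ V) : ∃ U ∈ nhds (1 : G), ∀ g ∈ U, ∀ x ∈ K, g • x ∈ V := by
  classical
  have hc : ∀ x ∈ K, ∃ (A : Set G) (B : Set X), IsOpen A ∧ IsOpen B ∧ (1 : G) ∈ A ∧ x ∈ B ∧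
      ∀ g ∈ A, ∀ y ∈ B, g • y ∈ V := by
    intro x hx
    have hW : IsOpen ((fun p : G × X => p.1 • p.2) ⁻¹' V) := hV.preimage continuous_smul
    have hmem : ((1 : G), x) ∈ (fun p : G × X => p.1 • p.2) ⁻¹' V := by
      simp only [Set.mem_preimage, one_smul]
      exact hKV hx
    obtain ⟨A, B, hA, hB, h1A, hxB, hAB⟩ := isOpen_prod_iff.mp hW 1 x hmem
    exact ⟨A, B, hA, hB, h1A, hxB, fun g hg y hy => hAB (Set.mk_mem_prod hg hy)⟩
  choose! A B hAopen hBopen h1A hxB hABV using hc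
  obtain ⟨s, hs⟩ := hK.elim_finite_subcover (fun x : K => B x.1)
    (fun x => hBopen x.1 x.2) (fun x hx => Set.mem_iUnion.mpr ⟨⟨x, hx⟩, hxB x hx⟩)
  refine ⟨⋂ x ∈ s, A x.1, ?_, ?_⟩
  · exact (Filter.biInter_finset_mem s).mpr
      (fun x _ => (hAopen x.1 x.2).mem_nhds (h1A x.1 x.2))
  · intro g hg x hx
    obtain ⟨x', hx's, hxB'⟩ := Set.mem_iUnion₂.mp (hs hx)
    have hgA : g ∈ A x'.1 := by
      simp only [Set.mem_iInter] at hg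
      exact hg x' hx's
    exact hABV x'.1 x'.2 g hgA x hxB'


lemma strictMono_perm_int (σ : Equiv.Perm ℤ) (h : StrictMono ⇑σ) :
    σ = Equiv.addRight (σ 0) := by
  have hsucc : ∀ n : ℤ, σ (n + 1) = σ n + 1 := by
    intro n
    have h1 : σ n < σ (n + 1) := h (by omega)
    by_contra hne
    have h2 : σ n + 1 < σ (n + 1) := by omega
    set k := σ.symm (σ n + 1) with hk
    have hσk : σ k = σ n + 1 := σ.apply_symm_apply _
    have hk1 : n < k := h.lt_iff_lt.mp (by omega)
    have hk2 : k < n + 1 := h.lt_iff_lt.mp (by omega)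
    omega
  have key : ∀ n : ℤ, σ n = n + σ 0 := by
    intro n
    induction n using Int.induction_on with
    | zero => simp
    | succ k ih => rw [hsucc k, ih]; ring
    | pred k ih =>
      have := hsucc (-(k:ℤ) - 1)
      have h2 : -(k:ℤ) - 1 + 1 = -(k:ℤ) := by ring
      rw [h2] at this
      omega
  ext n
  simp [key n, add_comm]

lemma addRight_int_zpow (c : ℤ) :
    (Equiv.addRight c : Equiv.Perm ℤ) = (Equiv.addRight (1 : ℤ)) ^ c := by
  induction c using Int.induction_on with
  | zero => ext n; simp
  | succ k ih =>
    rw [zpow_add_one, ← ih]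
    ext n
    simp [Equiv.Perm.mul_apply]
    ring
  | pred k ih =>
    rw [zpow_sub_one, ← ih]
    ext n
    simp [Equiv.Perm.mul_apply]
    ring

/-! ### the space of linear orders on ℤ -/

def IsLinB (R : ℤ → ℤ → Bool) : Prop :=
  (∀ a b, R a b = true ∨ R b a = true) ∧ (∀ a b, R a b = true → R b a = true → a = b) ∧
  (∀ a b c, R a b = true → R b c = true → R a c = true)

def OrderFlow : Type := {R : ℤ → ℤ → Bool // IsLinB R}

instance : TopologicalSpace OrderFlow :=
  inferInstanceAs (TopologicalSpace {R : ℤ → ℤ → Bool // IsLinB R})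

instance : T2Space OrderFlow := inferInstanceAs (T2Space {R : ℤ → ℤ → Bool // IsLinB R})

lemma isClosed_eval (a b : ℤ) (v : Bool) : IsClosed {R : ℤ → ℤ → Bool | R a b = v} := by
  show IsClosed ((fun R : ℤ → ℤ → Bool => R a b) ⁻¹' {v})
  exact (isClosed_discrete {v}).preimage ((continuous_apply b).comp (continuous_apply a))

lemma isClosed_setOf_isLinB : IsClosed {R : ℤ → ℤ → Bool | IsLinB R} := by
  have hs : {R : ℤ → ℤ → Bool | IsLinB R} =
      (⋂ (a : ℤ) (b : ℤ), ({R : ℤ → ℤ → Bool | R a b = true} ∪ {R | R b a = true})) ∩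
      ((⋂ (a : ℤ) (b : ℤ), {R : ℤ → ℤ → Bool | R a b = true → R b a = true → a = b}) ∩
       (⋂ (a : ℤ) (b : ℤ) (c : ℤ),
         ({R : ℤ → ℤ → Bool | R a b = false} ∪ {R | R b c = false} ∪ {R | R a c = true}))) := by
    ext R
    simp only [Set.mem_setOf_eq, Set.mem_inter_iff, Set.mem_iInter, Set.mem_union, IsLinB]
    constructor
    · rintro ⟨h1, h2, h3⟩
      refine ⟨fun a b => h1 a b, fun a b => h2 a b, fun a b c => ?_⟩
      rcases Bool.eq_false_or_eq_true (R a b) with h | h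
      · rcases Bool.eq_false_or_eq_true (R b c) with h' | h'
        · exact Or.inr (h3 a b c h h')
        · exact Or.inl (Or.inr h')
      · exact Or.inl (Or.inl h)
    · rintro ⟨h1, h2, h3⟩
      refine ⟨h1, h2, fun a b c hab hbc => ?_⟩
      rcases h3 a b c with (h | h) | h
      · rw [hab] at h; exact absurd h (by simp)
      · rw [hbc] at h; exact absurd h (by simp)
      · exact h
  rw [hs]
  refine IsClosed.inter (isClosed_iInter fun a => isClosed_iInter fun b =>
    (isClosed_eval a b true).union (isClosed_eval b a true)) (IsClosed.inter ?_ ?_)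
  · refine isClosed_iInter fun a => isClosed_iInter fun b => ?_
    rcases eq_or_ne a b with h | h
    · have : {R : ℤ → ℤ → Bool | R a b = true → R b a = true → a = b} = Set.univ := by
        ext R; simp [h]
      rw [this]; exact isClosed_univ
    · have : {R : ℤ → ℤ → Bool | R a b = true → R b a = true → a = b} =
          {R : ℤ → ℤ → Bool | R a b = false} ∪ {R | R b a = false} := by
        ext R
        simp only [Set.mem_setOf_eq, Set.mem_union]
        constructor
        · intro hR
          rcases Bool.eq_false_or_eq_true (R a b) with h' | h'
          · rcases Bool.eq_false_or_eq_true (R b a) with h'' | h''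
            · exact absurd (hR h' h'') h
            · exact Or.inr h''
          · exact Or.inl h'
        · rintro (h' | h') hab hba
          · rw [hab] at h'; exact absurd h' (by simp)
          · rw [hba] at h'; exact absurd h' (by simp)
      rw [this]
      exact (isClosed_eval a b false).union (isClosed_eval b a false)
  · exact isClosed_iInter fun a => isClosed_iInter fun b => isClosed_iInter fun c =>
      ((isClosed_eval a b false).union (isClosed_eval b c false)).union (isClosed_eval a c true)

instance : CompactSpace OrderFlow :=
  isCompact_iff_compactSpace.mp (isClosed_setOf_isLinB.isCompact)

instance : Nonempty OrderFlow := by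
  refine ⟨⟨fun a b => decide (a ≤ b), ?_, ?_, ?_⟩⟩
  · intro a b; simp only [decide_eq_true_eq]; omega
  · intro a b h1 h2; simp only [decide_eq_true_eq] at h1 h2; omega
  · intro a b c h1 h2; simp only [decide_eq_true_eq] at h1 h2 ⊢; omega

instance : SMul (Equiv.Perm ℤ) OrderFlow :=
  ⟨fun σ R => ⟨fun a b => R.1 (σ⁻¹ a) (σ⁻¹ b), by
    obtain ⟨htot, hanti, htrans⟩ := R.2
    exact ⟨fun a b => htot _ _,
      fun a b h1 h2 => (Equiv.injective _) (hanti _ _ h1 h2),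
      fun a b c h1 h2 => htrans _ _ _ h1 h2⟩⟩⟩

lemma orderFlow_smul_val (σ : Equiv.Perm ℤ) (R : OrderFlow) (a b : ℤ) :
    (σ • R).1 a b = R.1 (σ⁻¹ a) (σ⁻¹ b) := rfl

instance : MulAction (Equiv.Perm ℤ) OrderFlow where
  one_smul R := Subtype.ext (funext fun a => funext fun b => by
    show R.1 ((1 : Equiv.Perm ℤ)⁻¹ a) ((1 : Equiv.Perm ℤ)⁻¹ b) = R.1 a b
    simp)
  mul_smul σ τ R := Subtype.ext (funext fun a => funext fun b => by
    show R.1 ((σ * τ)⁻¹ a) ((σ * τ)⁻¹ b) = R.1 (τ⁻¹ (σ⁻¹ a)) (τ⁻¹ (σ⁻¹ b))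
    simp [mul_inv_rev, Equiv.Perm.mul_apply])

instance : ContinuousSMul (Equiv.Perm ℤ) OrderFlow := by
  constructor
  apply continuous_induced_rng.2
  show Continuous fun p : Equiv.Perm ℤ × OrderFlow => (fun a b => p.2.1 (p.1⁻¹ a) (p.1⁻¹ b))
  apply continuous_pi; intro a
  apply continuous_pi; intro b
  rw [continuous_iff_continuousAt]
  intro p₀
  have hO : IsOpen {p : Equiv.Perm ℤ × OrderFlow | p.1⁻¹ a = p₀.1⁻¹ a ∧ p.1⁻¹ b = p₀.1⁻¹ b} := by
    have h1 : IsOpen ({σ : Equiv.Perm ℤ | σ.symm a = p₀.1⁻¹ a} ∩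
        {σ : Equiv.Perm ℤ | σ.symm b = p₀.1⁻¹ b}) :=
      (isOpen_perm_symm_apply_eq _ _).inter (isOpen_perm_symm_apply_eq _ _)
    exact h1.preimage continuous_fst
  have hmem : p₀ ∈ {p : Equiv.Perm ℤ × OrderFlow | p.1⁻¹ a = p₀.1⁻¹ a ∧ p.1⁻¹ b = p₀.1⁻¹ b} :=
    ⟨rfl, rfl⟩
  apply ContinuousAt.congr (f := fun p : Equiv.Perm ℤ × OrderFlow => p.2.1 (p₀.1⁻¹ a) (p₀.1⁻¹ b))
  · exact ((continuous_apply (p₀.1⁻¹ b)).comp ((continuous_apply (p₀.1⁻¹ a)).comp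
      (continuous_subtype_val.comp continuous_snd))).continuousAt
  · filter_upwards [hO.mem_nhds hmem] with p hp
    rw [hp.1, hp.2]

lemma classifyB (R : ℤ → ℤ → Bool)
    (htot : ∀ a b, R a b = true ∨ R b a = true)
    (hanti : ∀ a b, R a b = true → R b a = true → a = b)
    (htrans : ∀ a b c, R a b = true → R b c = true → R a c = true)
    (hshift : ∀ a b, R (a + 1) (b + 1) = R a b)
    (h01 : R 0 1 = true) : ∀ a b, (R a b = true ↔ a ≤ b) := by
  have hshiftk : ∀ (k : ℤ) (a b : ℤ), R (a + k) (b + k) = R a b := by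
    intro k
    induction k using Int.induction_on with
    | zero => simp
    | succ n ih =>
      intro a b
      have h1 := hshift (a + n) (b + n)
      rw [show a + ((n : ℤ) + 1) = a + n + 1 by ring, show b + ((n : ℤ) + 1) = b + n + 1 by ring,
        h1, ih]
    | pred n ih =>
      intro a b
      have h1 := hshift (a + (-(n : ℤ) - 1)) (b + (-(n : ℤ) - 1))
      rw [show a + (-(n : ℤ) - 1) + 1 = a + -(n : ℤ) by ring,
        show b + (-(n : ℤ) - 1) + 1 = b + -(n : ℤ) by ring, ih] at h1
      convert h1.symm using 2
  have hpos : ∀ d : ℤ, 1 ≤ d → R 0 d = true := by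
    refine fun d hd => Int.le_induction (motive := fun e _ => R 0 e = true) (m := 1) ?_ ?_ d hd
    · exact h01
    · intro n hn ih
      have h1 := hshiftk n 0 1
      rw [zero_add, h01] at h1
      rw [show (1 : ℤ) + n = n + 1 from by ring] at h1
      exact htrans 0 n (n + 1) ih h1
  intro a b
  constructor
  · intro h
    by_contra hab
    push_neg at hab
    have h1 : R b a = true := by
      have h2 := hshiftk b 0 (a - b)
      rw [zero_add, show a - b + b = a by ring] at h2
      rw [h2]
      exact hpos (a - b) (by omega)
    have := hanti a b h h1
    omega
  · intro h
    rcases eq_or_lt_of_le h with rfl | hlt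
    · rcases htot a a with h1 | h1 <;> exact h1
    · have h2 := hshiftk a 0 (b - a)
      rw [zero_add, show b - a + a = b by ring] at h2
      rw [h2]
      exact hpos (b - a) (by omega)

lemma part2_aux (H' : Subgroup (Equiv.Perm ℤ)) (hle : strictMonoPerms ℤ ≤ H')
    (hrea : RelativelyExtremelyAmenable (Equiv.Perm ℤ) H') : H' = strictMonoPerms ℤ := by
  refine le_antisymm ?_ hle
  obtain ⟨x, hx⟩ := hrea OrderFlow
  have hτmem : (Equiv.addRight (1 : ℤ)) ∈ strictMonoPerms ℤ := by
    intro a b hab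
    simpa using hab
  have hfix : ∀ g ∈ H', ∀ a b, x.1 (g⁻¹ a) (g⁻¹ b) = x.1 a b := by
    intro g hg a b
    have h1 := congrArg Subtype.val (hx g hg)
    exact congrFun (congrFun h1 a) b
  have hshift : ∀ a b, x.1 (a + 1) (b + 1) = x.1 a b := by
    intro a b
    have h1 := hfix (Equiv.addRight (1 : ℤ))⁻¹ (H'.inv_mem (hle hτmem)) a b
    rw [inv_inv] at h1
    simpa using h1
  obtain ⟨htot, hanti, htrans⟩ := x.2
  intro σ hσ
  -- enough to show σ⁻¹ is strictly monotone
  suffices h : StrictMono ⇑σ⁻¹ by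
    have : σ⁻¹ ∈ strictMonoPerms ℤ := h
    have := (strictMonoPerms ℤ).inv_mem this
    rwa [inv_inv] at this
  have hσfix := hfix σ hσ
  cases hx01 : x.1 0 1 with
  | true =>
    have hcls := classifyB x.1 htot hanti htrans hshift hx01
    intro a b hab
    have h1 : σ⁻¹ a ≤ σ⁻¹ b := (hcls _ _).mp (by rw [hσfix a b]; exact (hcls a b).mpr hab.le)
    exact lt_of_le_of_ne h1 (fun he => hab.ne ((Equiv.injective _) he))
  | false =>
    have h10 : x.1 1 0 = true := by
      rcases htot 0 1 with h | h
      · rw [hx01] at h; exact absurd h (by simp)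
      · exact h
    set R' : ℤ → ℤ → Bool := fun a b => x.1 (-a) (-b) with hR'
    have hcls := classifyB R' (fun a b => htot _ _)
      (fun a b h1 h2 => by have := hanti _ _ h1 h2; omega)
      (fun a b c h1 h2 => htrans _ _ _ h1 h2)
      (by
        intro a b
        show x.1 (-(a+1)) (-(b+1)) = x.1 (-a) (-b)
        have h1 := hshift (-(a+1)) (-(b+1))
        rw [show -(a+1) + 1 = -a by ring, show -(b+1) + 1 = -b by ring] at h1
        exact h1.symm)
      (by
        show x.1 (-0 : ℤ) (-1 : ℤ) = true
        have h1 := hshift 0 (-1)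
        rw [show (0 : ℤ) + 1 = 1 by ring, show (-1 : ℤ) + 1 = 0 by ring] at h1
        rw [show (-0 : ℤ) = 0 by ring, ← h1, h10])
    -- x.1 a b = true ↔ b ≤ a
    have hcls' : ∀ a b, (x.1 a b = true ↔ b ≤ a) := by
      intro a b
      have := hcls (-a) (-b)
      simp only [hR', neg_neg] at this
      rw [this]
      omega
    intro a b hab
    have h1 : ¬ (σ⁻¹ b ≤ σ⁻¹ a) := by
      intro hle'
      have h2 : x.1 (σ⁻¹ a) (σ⁻¹ b) = true := (hcls' _ _).mpr hle'
      rw [hσfix a b] at h2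
      have := (hcls' a b).mp h2
      omega
    omega

lemma part1_aux : RelativelyExtremelyAmenable (Equiv.Perm ℤ) (strictMonoPerms ℤ) := by
  intro X _ _ _ _ _ _
  classical
  set τ : Equiv.Perm ℤ := Equiv.addRight (1 : ℤ) with hτ
  suffices hfp : ∃ x : X, τ • x = x by
    obtain ⟨x, hx⟩ := hfp
    refine ⟨x, fun h hh => ?_⟩
    have hmono : StrictMono ⇑h := hh
    have hzpow : h = τ ^ (h 0) :=
      (strictMono_perm_int h hmono).trans (addRight_int_zpow (h 0))
    have hstab : τ ∈ MulAction.stabilizer (Equiv.Perm ℤ) x := hx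
    have hmem : h ∈ MulAction.stabilizer (Equiv.Perm ℤ) x := by
      rw [hzpow]; exact Subgroup.zpow_mem _ hstab _
    exact hmem
  by_contra hnfp
  push_neg at hnfp
  have hsep : ∀ x : X, ∃ (W V1 V2 : Set X), IsOpen W ∧ x ∈ W ∧ IsOpen V1 ∧ IsOpen V2 ∧
      Disjoint V1 V2 ∧ closure W ⊆ V2 ∧ ∀ y ∈ closure W, τ • y ∈ V1 := by
    intro x
    obtain ⟨V1, V2, hV1, hV2, hmem1, hmem2, hdisj⟩ := t2_separation (hnfp x)
    have hUopen : IsOpen (V2 ∩ (fun y => τ • y) ⁻¹' V1) :=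
      hV2.inter (hV1.preimage (continuous_const_smul τ))
    have hxU : x ∈ V2 ∩ (fun y => τ • y) ⁻¹' V1 := ⟨hmem2, hmem1⟩
    obtain ⟨C, hCnhds, hCclosed, hCsub⟩ :=
      exists_mem_nhds_isClosed_subset (hUopen.mem_nhds hxU)
    refine ⟨interior C, V1, V2, isOpen_interior, mem_interior_iff_mem_nhds.mpr hCnhds,
      hV1, hV2, hdisj, ?_, ?_⟩
    · intro y hy
      exact (hCsub (closure_minimal interior_subset hCclosed hy)).1
    · intro y hy
      exact (hCsub (closure_minimal interior_subset hCclosed hy)).2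
  choose W V1 V2 hWopen hWmem hV1open hV2open hdisj hWV2 hWV1 using hsep
  obtain ⟨s, hs⟩ := isCompact_univ.elim_finite_subcover W hWopen
    (fun x _ => Set.mem_iUnion.mpr ⟨x, hWmem x⟩)
  obtain ⟨x₀⟩ := ‹Nonempty X›
  have hsne : s.Nonempty := by
    obtain ⟨z, hz, _⟩ := Set.mem_iUnion₂.mp (hs (Set.mem_univ x₀))
    exact ⟨z, hz⟩
  have htube : ∀ z : X, ∃ N ∈ nhds (1 : Equiv.Perm ℤ),
      ∀ g ∈ N, ∀ y ∈ closure (W z), g • y ∈ V2 z :=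
    fun z => exists_nhds_one_smul_mem (isClosed_closure.isCompact) (hV2open z) (hWV2 z)
  choose N hNnhds hNtube using htube
  have hNall : (⋂ z ∈ s, N z) ∈ nhds (1 : Equiv.Perm ℤ) :=
    (Filter.biInter_finset_mem s).mpr (fun z _ => hNnhds z)
  obtain ⟨F₀, hF₀⟩ := exists_finset_stab_subset hNall
  set F : Finset ℤ := insert 0 F₀ with hF
  have hFne : F.Nonempty := ⟨0, Finset.mem_insert_self _ _⟩
  set d : ℤ := F.min' hFne - 1 with hd
  set m : ℕ := (F.max' hFne - F.min' hFne + 2).toNat with hm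
  have hminmax : F.min' hFne ≤ F.max' hFne := F.min'_le _ (F.max'_mem hFne)
  have hm2 : 2 ≤ m := by omega
  have hFint : ∀ a ∈ F, ∃ jn : ℕ, 1 ≤ jn ∧ jn < m ∧ a = d + jn := by
    intro a ha
    have h1 := F.min'_le a ha
    have h2 := F.le_max' a ha
    refine ⟨(a - d).toNat, by omega, by omega, by omega⟩
  have hperm : ∀ (A : Finset ℕ) (hA : A.card = m), ∃ σ : Equiv.Perm ℤ,
      ∀ j : Fin m, σ (((A.orderEmbOfFin hA j : ℕ) : ℤ)) = d + ((j : ℕ) : ℤ) := by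
    intro A hA
    apply exists_perm_extend (fun j : Fin m => ((A.orderEmbOfFin hA j : ℕ) : ℤ))
      (fun j : Fin m => d + ((j : ℕ) : ℤ))
    · intro j k hjk
      exact (A.orderEmbOfFin hA).injective (Nat.cast_injective hjk)
    · intro j k hjk
      have hjk' : d + ((j : ℕ) : ℤ) = d + ((k : ℕ) : ℤ) := hjk
      have hjk'' : (j : ℕ) = (k : ℕ) := by omega
      exact Fin.ext hjk''
  choose permOf hpermOf using hperm
  have hcover : ∀ (A : Finset ℕ) (hA : A.card = m),
      ∃ z : {z : X // z ∈ s}, permOf A hA • x₀ ∈ W z.1 := by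
    intro A hA
    obtain ⟨z, hz, hmem⟩ := Set.mem_iUnion₂.mp (hs (Set.mem_univ (permOf A hA • x₀)))
    exact ⟨⟨z, hz⟩, hmem⟩
  choose col hcol using hcover
  haveI : Nonempty {z : X // z ∈ s} := ⟨⟨hsne.choose, hsne.choose_spec⟩⟩
  set c : Finset ℕ → {z : X // z ∈ s} :=
    fun A => if hA : A.card = m then col A hA else Classical.arbitrary _ with hc
  have hceq : ∀ (A : Finset ℕ) (hA : A.card = m), c A = col A hA := fun A hA => dif_pos hA
  obtain ⟨M, -, hMinf, i, hiM⟩ := infinite_ramsey m c Set.univ Set.infinite_univ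
  obtain ⟨t, htM, htcard⟩ := hMinf.exists_subset_card_eq (m + 1)
  set e := t.orderEmbOfFin htcard with he
  set A : Finset ℕ := Finset.image (fun j : Fin m => e j.castSucc) Finset.univ with hA
  set B : Finset ℕ := Finset.image (fun j : Fin m => e j.succ) Finset.univ with hB
  have hAinj : Function.Injective (fun j : Fin m => e j.castSucc) :=
    fun a b hab => (Fin.castSucc_injective m) (e.injective hab)
  have hBinj : Function.Injective (fun j : Fin m => e j.succ) :=
    fun a b hab => (Fin.succ_injective m) (e.injective hab)
  have hAcard : A.card = m := by
    rw [hA, Finset.card_image_of_injective _ hAinj, Finset.card_univ, Fintype.card_fin]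
  have hBcard : B.card = m := by
    rw [hB, Finset.card_image_of_injective _ hBinj, Finset.card_univ, Fintype.card_fin]
  have hAM : ↑A ⊆ M := by
    intro y hy
    rw [hA] at hy
    simp only [Finset.coe_image, Set.mem_image] at hy
    obtain ⟨j, -, rfl⟩ := hy
    exact htM (Finset.orderEmbOfFin_mem t htcard _)
  have hBM : ↑B ⊆ M := by
    intro y hy
    rw [hB] at hy
    simp only [Finset.coe_image, Set.mem_image] at hy
    obtain ⟨j, -, rfl⟩ := hy
    exact htM (Finset.orderEmbOfFin_mem t htcard _)
  have hAemb : ∀ j : Fin m, A.orderEmbOfFin hAcard j = e j.castSucc := by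
    have h1 := Finset.orderEmbOfFin_unique hAcard
      (f := fun j : Fin m => e j.castSucc)
      (fun j => by rw [hA]; exact Finset.mem_image_of_mem _ (Finset.mem_univ j))
      (e.strictMono.comp Fin.strictMono_castSucc)
    exact fun j => (congrFun h1 j).symm
  have hBemb : ∀ j : Fin m, B.orderEmbOfFin hBcard j = e j.succ := by
    have h1 := Finset.orderEmbOfFin_unique hBcard
      (f := fun j : Fin m => e j.succ)
      (fun j => by rw [hB]; exact Finset.mem_image_of_mem _ (Finset.mem_univ j))
      (e.strictMono.comp Fin.strictMono_succ)
    exact fun j => (congrFun h1 j).symm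
  set σA : Equiv.Perm ℤ := permOf A hAcard with hσA
  set σB : Equiv.Perm ℤ := permOf B hBcard with hσB
  set g : Equiv.Perm ℤ := τ * σB * σA⁻¹ with hg
  have hgstab : ∀ a ∈ F, g a = a := by
    intro a ha
    obtain ⟨jn, hj1, hjm, haeq⟩ := hFint a ha
    set j : Fin m := ⟨jn, hjm⟩ with hj
    set j' : Fin m := ⟨jn - 1, by omega⟩ with hj'
    have hsucceq : j'.succ = j.castSucc := by
      apply Fin.ext
      simp only [Fin.val_succ, Fin.coe_castSucc, hj', hj]
      omega
    have h1 : σA (((e j.castSucc : ℕ) : ℤ)) = d + jn := by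
      have h0 := hpermOf A hAcard j
      rw [hAemb j] at h0
      exact h0
    have h2 : σA⁻¹ a = ((e j.castSucc : ℕ) : ℤ) := by
      rw [haeq, ← h1]
      exact (Equiv.symm_apply_apply σA _)
    have h3 : σB (((e j.castSucc : ℕ) : ℤ)) = d + ((jn - 1 : ℕ) : ℤ) := by
      have h0 := hpermOf B hBcard j'
      rw [hBemb j', hsucceq] at h0
      exact h0
    show τ (σB (σA⁻¹ a)) = a
    rw [h2, h3, hτ]
    simp only [Equiv.coe_addRight]
    have : ((jn - 1 : ℕ) : ℤ) = (jn : ℤ) - 1 := by omega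
    omega
  have hgN : g ∈ ⋂ z ∈ s, N z := by
    apply hF₀
    intro a ha
    exact hgstab a (Finset.mem_insert_of_mem ha)
  have hcAi : col A hAcard = i := by rw [← hceq A hAcard]; exact hiM A hAM hAcard
  have hcBi : col B hBcard = i := by rw [← hceq B hBcard]; exact hiM B hBM hBcard
  have hmemA : σA • x₀ ∈ W i.1 := by rw [← hcAi]; exact hcol A hAcard
  have hmemB : σB • x₀ ∈ W i.1 := by rw [← hcBi]; exact hcol B hBcard
  have hgNi : g ∈ N i.1 := by
    simp only [Set.mem_iInter] at hgN
    exact hgN i.1 i.2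
  have h6 : g • (σA • x₀) ∈ V2 i.1 := hNtube i.1 g hgNi _ (subset_closure hmemA)
  have h7 : τ • (σB • x₀) ∈ V1 i.1 := hWV1 i.1 _ (subset_closure hmemB)
  have h8 : τ • (σB • x₀) = g • (σA • x₀) := by
    rw [← mul_smul, ← mul_smul, hg, inv_mul_cancel_right]
  rw [h8] at h7
  exact Set.disjoint_left.mp (hdisj i.1) h7 h6


end Aux

/-- For `S∞` the permutation group of `ℤ` with the topology of pointwise convergence and
`H` the subgroup of strictly increasing permutations (the stabilizer of the usual order,
i.e. the translations), the pair `(S∞, H)` is maximally relatively extremely amenable. -/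
theorem maximally_relativelyExtremelyAmenable_permInt_strictMono :
    RelativelyExtremelyAmenable (Equiv.Perm ℤ) (strictMonoPerms ℤ) ∧
      ∀ H' : Subgroup (Equiv.Perm ℤ), strictMonoPerms ℤ ≤ H' →
        RelativelyExtremelyAmenable (Equiv.Perm ℤ) H' → H' = strictMonoPerms ℤ :=
  ⟨part1_aux, part2_aux⟩
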